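/- Let S be a Cu-semigroup, regarded as a Q-semigroup with auxiliary relation the way-below relation ≪. Then the endpoint map φ_S : τ(S, ≪) → S, sending the class of a path f to sup_λ f(λ), is an order-isomorphism (bijective and both it and its inverse order-preserving). -/

import Mathlib

/-- The rationals in the open interval `(0,1)`, used as index set for paths. -/
abbrev Iq : Type := {q : ℚ // 0 < q ∧ q < 1}

lemma Iq.exists_gt (l : Iq) : ∃ m : Iq, l.1 < m.1 := by
  obtain ⟨h0, h1⟩ := l.2
  exact ⟨⟨(l.1 + 1) / 2, by constructor <;> linarith⟩, by show l.1 < (l.1 + 1) / 2; linarith⟩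

/-- The sequential way-below (compact containment) relation in a preordered set. -/
def CuWayBelow {S : Type*} [Preorder S] (x y : S) : Prop :=
  ∀ z : ℕ → S, Monotone z → ∀ s : S, IsLUB (Set.range z) s → y ≤ s → ∃ k, x ≤ z k

/-- A `P`-semigroup: a commutative monoid with an additive transitive relation. -/
structure PSgp (M : Type*) [AddCommMonoid M] where
  prec : M → M → Prop
  trans : ∀ ⦃a b c : M⦄, prec a b → prec b c → prec a c
  zero_prec : ∀ a : M, prec 0 a
  add_prec : ∀ ⦃a b c d : M⦄, prec a b → prec c d → prec (a + c) (b + d)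

namespace PSgp

variable {M : Type*} [AddCommMonoid M]

/-- A path in a `P`-semigroup, indexed by the rationals in `(0,1)`. -/
def IsPath (P : PSgp M) (f : Iq → M) : Prop :=
  ∀ ⦃l m : Iq⦄, l.1 < m.1 → P.prec (f l) (f m)

/-- The type of paths in a `P`-semigroup. -/
def Path (P : PSgp M) : Type _ := {f : Iq → M // P.IsPath f}

variable {P : PSgp M}

instance : Add P.Path :=
  ⟨fun f g => ⟨fun l => f.1 l + g.1 l, fun _ _ h => P.add_prec (f.2 h) (g.2 h)⟩⟩

instance : Zero P.Path := ⟨⟨fun _ => 0, fun _ _ _ => P.zero_prec 0⟩⟩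

lemma path_add_apply (f g : P.Path) (l : Iq) : (f + g).1 l = f.1 l + g.1 l := rfl

/-- The pre-order relation between paths. -/
def pLe (f g : P.Path) : Prop := ∀ l : Iq, ∃ m : Iq, P.prec (f.1 l) (g.1 m)

lemma pLe_refl (f : P.Path) : pLe f f := fun l => by
  obtain ⟨m, hm⟩ := Iq.exists_gt l
  exact ⟨m, f.2 hm⟩

lemma pLe_trans {f g h : P.Path} (h1 : pLe f g) (h2 : pLe g h) : pLe f h := fun l => by
  obtain ⟨m, hm⟩ := h1 l
  obtain ⟨m', hm'⟩ := h2 m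
  exact ⟨m', P.trans hm hm'⟩

lemma pLe_add {f g f' g' : P.Path} (h1 : pLe f f') (h2 : pLe g g') : pLe (f + g) (f' + g') := by
  intro l
  obtain ⟨m1, hm1⟩ := h1 l
  obtain ⟨m2, hm2⟩ := h2 l
  have hmem : 0 < max m1.1 m2.1 ∧ max m1.1 m2.1 < 1 :=
    ⟨lt_max_of_lt_left m1.2.1, max_lt m1.2.2 m2.2.2⟩
  obtain ⟨μ, hμ⟩ := Iq.exists_gt ⟨max m1.1 m2.1, hmem⟩
  have e1 : m1.1 < μ.1 := lt_of_le_of_lt (le_max_left _ _) hμ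
  have e2 : m2.1 < μ.1 := lt_of_le_of_lt (le_max_right _ _) hμ
  exact ⟨μ, P.add_prec (P.trans hm1 (f'.2 e1)) (P.trans hm2 (g'.2 e2))⟩

instance pathSetoid (P : PSgp M) : Setoid P.Path where
  r f g := pLe f g ∧ pLe g f
  iseqv := ⟨fun f => ⟨pLe_refl f, pLe_refl f⟩, fun h => ⟨h.2, h.1⟩,
    fun h1 h2 => ⟨pLe_trans h1.1 h2.1, pLe_trans h2.2 h1.2⟩⟩

/-- The path construction `τ(S)`: equivalence classes of paths. -/
abbrev Tau (P : PSgp M) : Type _ := Quotient (pathSetoid P)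

def addT : Tau P → Tau P → Tau P :=
  Quotient.map₂ (· + ·) fun _ _ hf _ _ hg => ⟨pLe_add hf.1 hg.1, pLe_add hf.2 hg.2⟩

lemma addT_mk (f g : P.Path) : addT ⟦f⟧ ⟦g⟧ = ⟦f + g⟧ := rfl

lemma path_add_assoc (f g h : P.Path) : f + g + h = f + (g + h) :=
  Subtype.ext (funext fun _ => add_assoc _ _ _)

lemma path_add_comm (f g : P.Path) : f + g = g + f :=
  Subtype.ext (funext fun _ => add_comm _ _)

lemma path_zero_add (f : P.Path) : 0 + f = f :=
  Subtype.ext (funext fun _ => zero_add _)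

lemma path_add_zero (f : P.Path) : f + 0 = f :=
  Subtype.ext (funext fun _ => add_zero _)

instance : Zero (Tau P) := ⟨⟦(0 : P.Path)⟧⟩
instance : Add (Tau P) := ⟨addT⟩

instance : AddCommMonoid (Tau P) where
  add := addT
  zero := ⟦(0 : P.Path)⟧
  add_assoc a b c := Quotient.inductionOn₃ a b c fun f g h => by
    show addT (addT ⟦f⟧ ⟦g⟧) ⟦h⟧ = addT ⟦f⟧ (addT ⟦g⟧ ⟦h⟧)
    rw [addT_mk, addT_mk, addT_mk, addT_mk, path_add_assoc]
  zero_add a := Quotient.inductionOn a fun f => by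
    show addT ⟦(0 : P.Path)⟧ ⟦f⟧ = ⟦f⟧
    rw [addT_mk, path_zero_add]
  add_zero a := Quotient.inductionOn a fun f => by
    show addT ⟦f⟧ ⟦(0 : P.Path)⟧ = ⟦f⟧
    rw [addT_mk, path_add_zero]
  add_comm a b := Quotient.inductionOn₂ a b fun f g => by
    show addT ⟦f⟧ ⟦g⟧ = addT ⟦g⟧ ⟦f⟧
    rw [addT_mk, addT_mk, path_add_comm]
  nsmul := nsmulRec
  nsmul_zero := fun _ => rfl
  nsmul_succ := fun _ _ => rfl

def leT : Tau P → Tau P → Prop :=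
  Quotient.lift₂ pLe fun _ _ _ _ hf hg => propext
    ⟨fun h => pLe_trans hf.2 (pLe_trans h hg.1), fun h => pLe_trans hf.1 (pLe_trans h hg.2)⟩

instance : PartialOrder (Tau P) where
  le := leT
  le_refl a := Quotient.inductionOn a pLe_refl
  le_trans a b c := Quotient.inductionOn₃ a b c fun _ _ _ h1 h2 => pLe_trans h1 h2
  le_antisymm a b := Quotient.inductionOn₂ a b fun _ _ h1 h2 => Quotient.sound ⟨h1, h2⟩

lemma leT_mk (f g : P.Path) : (⟦f⟧ : Tau P) ≤ ⟦g⟧ ↔ pLe f g := Iff.rfl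

end PSgp

/-- An abstract Cuntz semigroup: a positively ordered monoid satisfying (O1)-(O4). -/
class IsCuSgp (S : Type*) [AddCommMonoid S] [PartialOrder S] : Prop where
  zero_le : ∀ a : S, 0 ≤ a
  add_mono : ∀ ⦃a b c d : S⦄, a ≤ b → c ≤ d → a + c ≤ b + d
  O1 : ∀ z : ℕ → S, Monotone z → ∃ s, IsLUB (Set.range z) s
  O2 : ∀ a : S, ∃ z : ℕ → S, (∀ n, CuWayBelow (z n) (z (n + 1))) ∧ IsLUB (Set.range z) a
  O3 : ∀ ⦃a' a b' b : S⦄, CuWayBelow a' a → CuWayBelow b' b → CuWayBelow (a' + b') (a + b)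
  O4 : ∀ z w : ℕ → S, Monotone z → Monotone w → ∀ s t : S, IsLUB (Set.range z) s →
    IsLUB (Set.range w) t → IsLUB (Set.range fun n => z n + w n) (s + t)


namespace CuAux

variable {S : Type*} [AddCommMonoid S] [PartialOrder S] [IsCuSgp S]

lemma wb_le {x y : S} (h : CuWayBelow x y) : x ≤ y := by
  obtain ⟨k, hk⟩ := h (fun _ => y) monotone_const y
    (by rw [Set.range_const]; exact isLUB_singleton) le_rfl
  exact hk

lemma le_wb {x y z : S} (h1 : x ≤ y) (h2 : CuWayBelow y z) : CuWayBelow x z := by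
  intro w hw s hs hzs
  obtain ⟨k, hk⟩ := h2 w hw s hs hzs
  exact ⟨k, h1.trans hk⟩

lemma wb_le' {x y z : S} (h1 : CuWayBelow x y) (h2 : y ≤ z) : CuWayBelow x z := by
  intro w hw s hs hzs
  exact h1 w hw s hs (h2.trans hzs)

lemma wb_trans {x y z : S} (h1 : CuWayBelow x y) (h2 : CuWayBelow y z) : CuWayBelow x z :=
  le_wb (wb_le h1) h2

lemma zero_wb (y : S) : CuWayBelow 0 y := fun z _ _ _ _ => ⟨0, IsCuSgp.zero_le _⟩

lemma interp {x y : S} (h : CuWayBelow x y) : ∃ w, CuWayBelow x w ∧ CuWayBelow w y := by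
  obtain ⟨z, hz, hlub⟩ := IsCuSgp.O2 y
  have hmono : Monotone z := monotone_nat_of_le_succ fun n => wb_le (hz n)
  obtain ⟨k, hk⟩ := h z hmono y hlub le_rfl
  refine ⟨z (k + 1), le_wb hk (hz k), wb_le' (hz (k + 1)) ?_⟩
  exact hlub.1 (Set.mem_range_self _)

/-- cofinal monotone sequence in Iq -/
def lseq (n : ℕ) : Iq :=
  ⟨1 - 1 / (n + 2 : ℚ), by
    have h2 : (0:ℚ) < (n:ℚ) + 2 := by positivity
    have h3 : 1 / ((n:ℚ) + 2) < 1 := by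
      rw [div_lt_one h2]; linarith [Nat.cast_nonneg (α := ℚ) n]
    have h4 : 0 < 1 / ((n:ℚ) + 2) := by positivity
    constructor <;> linarith⟩

lemma lseq_lt {n m : ℕ} (h : n < m) : (lseq n).1 < (lseq m).1 := by
  have h1 : (0:ℚ) < (n:ℚ) + 2 := by positivity
  have h2 : (0:ℚ) < (m:ℚ) + 2 := by positivity
  have : 1 / ((m:ℚ) + 2) < 1 / ((n:ℚ) + 2) := by
    apply one_div_lt_one_div_of_lt h1
    have : (n:ℚ) < m := by exact_mod_cast h
    linarith
  show 1 - 1 / ((n:ℚ) + 2) < 1 - 1 / ((m:ℚ) + 2)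
  linarith

lemma lseq_cofinal (m : Iq) : ∃ n : ℕ, m.1 < (lseq n).1 := by
  obtain ⟨h0, h1⟩ := m.2
  obtain ⟨n, hn⟩ := exists_nat_gt ((1 - m.1)⁻¹)
  refine ⟨n, ?_⟩
  have hp : (0:ℚ) < 1 - m.1 := by linarith
  have hip : (0:ℚ) < (1 - m.1)⁻¹ := by positivity
  have h2 : (1 - m.1)⁻¹ < (n:ℚ) + 2 := by linarith
  have h3 : 1 / ((n:ℚ) + 2) < 1 - m.1 := by
    rw [div_lt_iff₀ (by positivity)]
    calc (1:ℚ) = (1 - m.1) * (1 - m.1)⁻¹ := by rw [mul_inv_cancel₀ (ne_of_gt hp)]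
    _ < (1 - m.1) * ((n:ℚ) + 2) := by exact mul_lt_mul_of_pos_left h2 hp
  show m.1 < 1 - 1 / ((n:ℚ) + 2)
  linarith

lemma path_lub {f : Iq → S} (hf : ∀ ⦃l m : Iq⦄, l.1 < m.1 → CuWayBelow (f l) (f m)) :
    ∃ s, IsLUB (Set.range f) s ∧ IsLUB (Set.range (f ∘ lseq)) s := by
  have hmono : Monotone (f ∘ lseq) := monotone_nat_of_le_succ fun n =>
    wb_le (hf (lseq_lt (Nat.lt_succ_self n)))
  obtain ⟨s, hs⟩ := IsCuSgp.O1 (f ∘ lseq) hmono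
  refine ⟨s, ⟨?_, ?_⟩, hs⟩
  · rintro _ ⟨m, rfl⟩
    obtain ⟨n, hn⟩ := lseq_cofinal m
    exact (wb_le (hf hn)).trans (hs.1 (Set.mem_range_self n))
  · intro b hb
    exact hs.2 fun _ ⟨n, hn⟩ => hb ⟨lseq n, hn⟩

end CuAux

namespace CuAux

instance : Infinite Iq := by
  apply Infinite.of_injective (fun n : ℕ => (⟨1 / (n + 2 : ℚ), by
    have h2 : (0:ℚ) < (n:ℚ) + 2 := by positivity
    constructor
    · positivity
    · rw [div_lt_one h2]; linarith [Nat.cast_nonneg (α := ℚ) n]⟩ : Iq))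
  intro a b hab
  have : (1 : ℚ) / (a + 2) = 1 / (b + 2) := congrArg Subtype.val hab
  field_simp at this
  exact Nat.add_right_cancel (by exact_mod_cast this.symm : a + 2 = b + 2)

noncomputable instance : Denumerable Iq := Denumerable.ofEncodableOfInfinite Iq

variable {S : Type*} [AddCommMonoid S] [PartialOrder S] [IsCuSgp S]

def ChainPred (x y : S) (e : ℕ ≃ Iq) (v : ℕ → S) (n : ℕ) (w : S) : Prop :=
  CuWayBelow x w ∧ CuWayBelow w y ∧
    ∀ i < n, ((e i).1 < (e n).1 → CuWayBelow (v i) w) ∧ ((e n).1 < (e i).1 → CuWayBelow w (v i))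

noncomputable def chainA (x y : S) (e : ℕ ≃ Iq) : ℕ → ℕ → S
  | 0 => fun _ => 0
  | n+1 => fun m =>
      if m = n then @Classical.epsilon S ⟨0⟩ (ChainPred x y e (chainA x y e n) n)
      else chainA x y e n m

noncomputable def chainV (x y : S) (e : ℕ ≃ Iq) (n : ℕ) : S := chainA x y e (n+1) n

lemma chainA_eq (x y : S) (e : ℕ ≃ Iq) : ∀ n m, m < n → chainA x y e n m = chainV x y e m := by
  intro n
  induction n with
  | zero => intro m h; omega
  | succ n ih =>
    intro m h
    by_cases hm : m = n
    · subst hm; rfl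
    · have hlt : m < n := by omega
      show (if m = n then _ else chainA x y e n m) = _
      rw [if_neg hm, ih m hlt]

lemma chainPred_iff (x y : S) (e : ℕ ≃ Iq) (n : ℕ) (w : S) :
    ChainPred x y e (chainA x y e n) n w ↔ ChainPred x y e (chainV x y e) n w := by
  unfold ChainPred
  constructor <;> rintro ⟨h1, h2, h3⟩ <;> refine ⟨h1, h2, fun i hi => ?_⟩
  · rw [← chainA_eq x y e n i hi]; exact h3 i hi
  · rw [chainA_eq x y e n i hi]; exact h3 i hi

lemma chainV_def (x y : S) (e : ℕ ≃ Iq) (n : ℕ) :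
    chainV x y e n = @Classical.epsilon S ⟨0⟩ (ChainPred x y e (chainA x y e n) n) := by
  show (if n = n then _ else _) = _
  rw [if_pos rfl]

lemma eIq_lt_of_val_lt {e : ℕ ≃ Iq} {i j : ℕ} (h : (e i).1 < (e j).1) : i ≠ j :=
  fun hij => by subst hij; exact lt_irrefl _ h

lemma chain_good (x y : S) (e : ℕ ≃ Iq) (hxy : CuWayBelow x y) :
    ∀ n, ChainPred x y e (chainV x y e) n (chainV x y e n) := by
  intro n
  induction n using Nat.strong_induction_on with
  | _ n ih =>
  have hrel : ∀ i j, i < n → j < n → (e i).1 < (e j).1 →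
      CuWayBelow (chainV x y e i) (chainV x y e j) := by
    intro i j hi hj hij
    rcases lt_or_gt_of_ne (eIq_lt_of_val_lt hij) with h | h
    · exact ((ih j hj).2.2 i h).1 hij
    · exact ((ih i hi).2.2 j h).2 hij
  have hex : ∃ w, ChainPred x y e (chainV x y e) n w := by
    -- lower "bound"
    obtain ⟨lo, hlo1, hlo2, hlo3⟩ : ∃ lo : S, x ≤ lo ∧
        (∀ i < n, (e i).1 < (e n).1 → chainV x y e i ≤ lo) ∧
        (lo = x ∨ ∃ i0, i0 < n ∧ (e i0).1 < (e n).1 ∧ lo = chainV x y e i0) := by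
      by_cases hB : ∃ i, i < n ∧ (e i).1 < (e n).1
      · set B := (Finset.range n).filter (fun i => (e i).1 < (e n).1) with hBdef
        have hBne : B.Nonempty := by
          obtain ⟨i, hi1, hi2⟩ := hB
          exact ⟨i, Finset.mem_filter.2 ⟨Finset.mem_range.2 hi1, hi2⟩⟩
        obtain ⟨i0, hi0B, hi0max⟩ := Finset.exists_max_image B (fun i => (e i).1) hBne
        have hi0n : i0 < n := Finset.mem_range.1 (Finset.mem_filter.1 hi0B).1
        have hi0lt : (e i0).1 < (e n).1 := (Finset.mem_filter.1 hi0B).2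
        refine ⟨chainV x y e i0, wb_le (ih i0 hi0n).1, ?_, Or.inr ⟨i0, hi0n, hi0lt, rfl⟩⟩
        intro i hi hilt
        by_cases hii : i = i0
        · subst hii; exact le_rfl
        · have hiB : i ∈ B := Finset.mem_filter.2 ⟨Finset.mem_range.2 hi, hilt⟩
          have hle : (e i).1 ≤ (e i0).1 := hi0max i hiB
          have hne : (e i).1 ≠ (e i0).1 := fun h =>
            hii (e.injective (Subtype.ext h))
          exact wb_le (hrel i i0 hi hi0n (lt_of_le_of_ne hle hne))
      · refine ⟨x, le_rfl, ?_, Or.inl rfl⟩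
        intro i hi hilt
        exact absurd ⟨i, hi, hilt⟩ hB
    -- upper "bound"
    obtain ⟨hi', hhi1, hhi2, hhi3⟩ : ∃ hi' : S, hi' ≤ y ∧
        (∀ j < n, (e n).1 < (e j).1 → hi' ≤ chainV x y e j) ∧
        (hi' = y ∨ ∃ j0, j0 < n ∧ (e n).1 < (e j0).1 ∧ hi' = chainV x y e j0) := by
      by_cases hC : ∃ j, j < n ∧ (e n).1 < (e j).1
      · set C := (Finset.range n).filter (fun j => (e n).1 < (e j).1) with hCdef
        have hCne : C.Nonempty := by
          obtain ⟨j, hj1, hj2⟩ := hC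
          exact ⟨j, Finset.mem_filter.2 ⟨Finset.mem_range.2 hj1, hj2⟩⟩
        obtain ⟨j0, hj0C, hj0min⟩ := Finset.exists_min_image C (fun j => (e j).1) hCne
        have hj0n : j0 < n := Finset.mem_range.1 (Finset.mem_filter.1 hj0C).1
        have hj0lt : (e n).1 < (e j0).1 := (Finset.mem_filter.1 hj0C).2
        refine ⟨chainV x y e j0, wb_le (ih j0 hj0n).2.1, ?_, Or.inr ⟨j0, hj0n, hj0lt, rfl⟩⟩
        intro j hj hjlt
        by_cases hjj : j = j0
        · subst hjj; exact le_rfl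
        · have hjC : j ∈ C := Finset.mem_filter.2 ⟨Finset.mem_range.2 hj, hjlt⟩
          have hle : (e j0).1 ≤ (e j).1 := hj0min j hjC
          have hne : (e j0).1 ≠ (e j).1 := fun h =>
            hjj (e.injective (Subtype.ext h)).symm
          exact wb_le (hrel j0 j hj0n hj (lt_of_le_of_ne hle hne))
      · refine ⟨y, le_rfl, ?_, Or.inl rfl⟩
        intro j hj hjlt
        exact absurd ⟨j, hj, hjlt⟩ hC
    -- lo ≪ hi'
    have hlohi : CuWayBelow lo hi' := by
      rcases hlo3 with rfl | ⟨i0, hi0n, hi0lt, rfl⟩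
      · rcases hhi3 with rfl | ⟨j0, hj0n, hj0lt, rfl⟩
        · exact hxy
        · exact (ih j0 hj0n).1
      · rcases hhi3 with rfl | ⟨j0, hj0n, hj0lt, rfl⟩
        · exact (ih i0 hi0n).2.1
        · exact hrel i0 j0 hi0n hj0n (hi0lt.trans hj0lt)
    obtain ⟨w, hw1, hw2⟩ := interp hlohi
    refine ⟨w, le_wb hlo1 hw1, wb_le' hw2 hhi1, fun i hi => ⟨fun h => le_wb (hlo2 i hi h) hw1,
      fun h => wb_le' hw2 (hhi2 i hi h)⟩⟩
  have hex' : ∃ w, ChainPred x y e (chainA x y e n) n w := by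
    obtain ⟨w, hw⟩ := hex
    exact ⟨w, (chainPred_iff x y e n w).2 hw⟩
  have hspec : ChainPred x y e (chainA x y e n) n (chainV x y e n) := by
    rw [chainV_def]; exact Classical.epsilon_spec hex'
  exact (chainPred_iff x y e n _).1 hspec

lemma exists_chain {x y : S} (hxy : CuWayBelow x y) : ∃ c : Iq → S,
    (∀ ⦃l m : Iq⦄, l.1 < m.1 → CuWayBelow (c l) (c m)) ∧
    ∀ l, CuWayBelow x (c l) ∧ CuWayBelow (c l) y := by
  let e : ℕ ≃ Iq := (Denumerable.eqv Iq).symm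
  refine ⟨fun l => chainV x y e (e.symm l), ?_, ?_⟩
  · intro l m hlm
    have hl : e (e.symm l) = l := e.apply_symm_apply l
    have hm : e (e.symm m) = m := e.apply_symm_apply m
    have hij : (e (e.symm l)).1 < (e (e.symm m)).1 := by rw [hl, hm]; exact hlm
    rcases lt_or_gt_of_ne (eIq_lt_of_val_lt hij) with h | h
    · exact ((chain_good x y e hxy (e.symm m)).2.2 _ h).1 hij
    · exact ((chain_good x y e hxy (e.symm l)).2.2 _ h).2 hij
  · intro l
    have := chain_good x y e hxy (e.symm l)
    exact ⟨this.1, this.2.1⟩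

end CuAux

namespace CuAux

variable {S : Type*} [AddCommMonoid S] [PartialOrder S] [IsCuSgp S]

/-- breakpoints `q k = 1 - 1/(k+1)`, increasing from 0 to 1. -/
def qb (k : ℕ) : ℚ := 1 - 1 / ((k:ℚ) + 1)

lemma qb_pos (k : ℕ) : (0:ℚ) < (k:ℚ) + 1 := by positivity

lemma qb_nonneg (k : ℕ) : 0 ≤ qb k := by
  have h := qb_pos k
  have : 1 / ((k:ℚ) + 1) ≤ 1 := by
    rw [div_le_one h]; linarith [Nat.cast_nonneg (α := ℚ) k]
  unfold qb; linarith

lemma qb_lt_one (k : ℕ) : qb k < 1 := by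
  have h := qb_pos k
  have : 0 < 1 / ((k:ℚ) + 1) := by positivity
  unfold qb; linarith

lemma qb_strictMono : StrictMono qb := by
  intro j k hjk
  have hj := qb_pos j
  have hk := qb_pos k
  have : 1 / ((k:ℚ) + 1) < 1 / ((j:ℚ) + 1) := by
    apply one_div_lt_one_div_of_lt hj
    have : (j:ℚ) < k := by exact_mod_cast hjk
    linarith
  unfold qb; linarith

/-- the interval index of a point `l ∈ (0,1)`. -/
def kk (l : Iq) : ℕ := ⌊(1 - l.1)⁻¹⌋₊ - 1

lemma kk_floor_pos (l : Iq) : 1 ≤ ⌊(1 - l.1)⁻¹⌋₊ := by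
  obtain ⟨h0, h1⟩ := l.2
  have hp : (0:ℚ) < 1 - l.1 := by linarith
  have h2 : (1:ℚ) ≤ (1 - l.1)⁻¹ := by
    have := one_div_le_one_div_of_le hp (by linarith : 1 - l.1 ≤ 1)
    rw [one_div, one_div, inv_one] at this
    exact this
  exact_mod_cast Nat.le_floor (by exact_mod_cast h2)

lemma kk_succ (l : Iq) : kk l + 1 = ⌊(1 - l.1)⁻¹⌋₊ := by
  have := kk_floor_pos l
  unfold kk; omega

lemma qb_kk_le (l : Iq) : qb (kk l) ≤ l.1 := by
  obtain ⟨h0, h1⟩ := l.2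
  have hp : (0:ℚ) < 1 - l.1 := by linarith
  set N := ⌊(1 - l.1)⁻¹⌋₊ with hN
  have hN1 : 1 ≤ N := kk_floor_pos l
  have hNpos : (0:ℚ) < N := by exact_mod_cast hN1
  have hfl : (N:ℚ) ≤ (1 - l.1)⁻¹ := Nat.floor_le (by positivity)
  have key : 1 - l.1 ≤ 1 / (N:ℚ) := by
    rw [le_div_iff₀ hNpos]
    calc (1 - l.1) * N ≤ (1 - l.1) * (1 - l.1)⁻¹ := by
          exact mul_le_mul_of_nonneg_left hfl (le_of_lt hp)
    _ = 1 := mul_inv_cancel₀ (ne_of_gt hp)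
  have hcast : ((kk l : ℕ) : ℚ) + 1 = (N:ℚ) := by
    exact_mod_cast congrArg (Nat.cast (R := ℚ)) (kk_succ l)
  unfold qb
  rw [hcast]
  linarith

lemma lt_qb_kk_succ (l : Iq) : l.1 < qb (kk l + 1) := by
  obtain ⟨h0, h1⟩ := l.2
  have hp : (0:ℚ) < 1 - l.1 := by linarith
  set N := ⌊(1 - l.1)⁻¹⌋₊ with hN
  have hlt : (1 - l.1)⁻¹ < (N:ℚ) + 1 := Nat.lt_floor_add_one _
  have hNpos : (0:ℚ) < (N:ℚ) + 1 := by positivity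
  have key : 1 / ((N:ℚ) + 1) < 1 - l.1 := by
    rw [div_lt_iff₀ hNpos]
    calc (1:ℚ) = (1 - l.1) * (1 - l.1)⁻¹ := (mul_inv_cancel₀ (ne_of_gt hp)).symm
    _ < (1 - l.1) * ((N:ℚ) + 1) := mul_lt_mul_of_pos_left hlt hp
  have hcast : ((kk l + 1 : ℕ) : ℚ) + 1 = (N:ℚ) + 1 := by
    exact_mod_cast congrArg (fun n : ℕ => ((n:ℚ) + 1)) (kk_succ l)
  unfold qb
  rw [hcast]
  linarith

lemma kk_unique (l : Iq) (k : ℕ) (h1 : qb k ≤ l.1) (h2 : l.1 < qb (k + 1)) : kk l = k := by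
  by_contra hne
  rcases Nat.lt_or_ge (kk l) k with h | h
  · have : kk l + 1 ≤ k := h
    have := (qb_strictMono.monotone this).trans h1
    exact absurd this (not_le.2 (lt_qb_kk_succ l))
  · have hk : k < kk l := lt_of_le_of_ne h (fun hh => hne hh.symm)
    have : k + 1 ≤ kk l := hk
    have := (qb_strictMono.monotone this).trans (qb_kk_le l)
    exact absurd this (not_le.2 h2)

lemma kk_mono {l m : Iq} (h : l.1 ≤ m.1) : kk l ≤ kk m := by
  have hpl : (0:ℚ) < 1 - l.1 := by linarith [l.2.2]
  have hpm : (0:ℚ) < 1 - m.1 := by linarith [m.2.2]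
  have : (1 - l.1)⁻¹ ≤ (1 - m.1)⁻¹ := by
    apply inv_anti₀ hpm
    linarith
  have := Nat.floor_le_floor this
  unfold kk; omega

/-- affine reparametrisation of the `k`-th interval into `(0,1)` -/
def rq (k : ℕ) (t : ℚ) : ℚ := 1/4 + (t - qb k) * (((k:ℚ) + 1) * ((k:ℚ) + 2)) / 2

lemma rq_gap (k : ℕ) : qb (k+1) - qb k = 1 / (((k:ℚ) + 1) * ((k:ℚ) + 2)) := by
  unfold qb
  have h1 : ((k:ℚ) + 1) ≠ 0 := ne_of_gt (qb_pos k)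
  have h2 : ((k:ℚ) + 1 + 1) ≠ 0 := by positivity
  push_cast
  field_simp
  ring

lemma rq_mem {k : ℕ} {t : ℚ} (h1 : qb k ≤ t) (h2 : t < qb (k+1)) :
    0 < rq k t ∧ rq k t < 1 := by
  set A := ((k:ℚ) + 1) * ((k:ℚ) + 2) with hA
  have hApos : 0 < A := by positivity
  have hd0 : 0 ≤ t - qb k := by linarith
  have hd1 : (t - qb k) * A < 1 := by
    have : t - qb k < 1 / A := by
      rw [← rq_gap k]; linarith
    calc (t - qb k) * A < (1 / A) * A := mul_lt_mul_of_pos_right this hApos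
    _ = 1 := by field_simp
  have hd2 : 0 ≤ (t - qb k) * A := mul_nonneg hd0 (le_of_lt hApos)
  unfold rq
  rw [← hA]
  constructor <;> linarith

lemma rq_strictMono {k : ℕ} {t t' : ℚ} (h : t < t') : rq k t < rq k t' := by
  have hApos : 0 < ((k:ℚ) + 1) * ((k:ℚ) + 2) := by positivity
  unfold rq
  have := mul_lt_mul_of_pos_right (show t - qb k < t' - qb k by linarith) hApos
  linarith

lemma exists_path_lub (a : S) : ∃ f : Iq → S,
    (∀ ⦃l m : Iq⦄, l.1 < m.1 → CuWayBelow (f l) (f m)) ∧ IsLUB (Set.range f) a := by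
  obtain ⟨z, hz, hlub⟩ := IsCuSgp.O2 a
  have hzmono : Monotone z := monotone_nat_of_le_succ fun n => wb_le (hz n)
  -- chain for each interval
  have hch : ∀ k, ∃ c : Iq → S, (∀ ⦃l m : Iq⦄, l.1 < m.1 → CuWayBelow (c l) (c m)) ∧
      ∀ l, CuWayBelow (z k) (c l) ∧ CuWayBelow (c l) (z (k+1)) := fun k => exists_chain (hz k)
  choose c hc1 hc2 using hch
  -- the point of the k-th chain used for l
  have hmem : ∀ l : Iq, 0 < rq (kk l) l.1 ∧ rq (kk l) l.1 < 1 :=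
    fun l => rq_mem (qb_kk_le l) (lt_qb_kk_succ l)
  set f : Iq → S := fun l => c (kk l) ⟨rq (kk l) l.1, hmem l⟩ with hf
  have hpath : ∀ ⦃l m : Iq⦄, l.1 < m.1 → CuWayBelow (f l) (f m) := by
    intro l m hlm
    rcases Nat.lt_or_ge (kk l) (kk m) with hk | hk
    · -- different intervals
      have h1 : CuWayBelow (f l) (z (kk l + 1)) := (hc2 (kk l) _).2
      have h2 : CuWayBelow (z (kk m)) (f m) := (hc2 (kk m) _).1
      have h3 : z (kk l + 1) ≤ z (kk m) := hzmono hk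
      exact wb_trans (wb_le' h1 h3) h2
    · -- same interval
      have hk' : kk l = kk m := le_antisymm (kk_mono (le_of_lt hlm)) hk
      have hrlt : (rq (kk l) l.1 : ℚ) < rq (kk m) m.1 := by
        rw [← hk']; exact rq_strictMono hlm
      have key : ∀ k k' : ℕ, k = k' → ∀ u v : Iq, u.1 < v.1 → CuWayBelow (c k u) (c k' v) := by
        rintro k _ rfl u v huv
        exact hc1 k huv
      exact key (kk l) (kk m) hk' _ _ hrlt
  refine ⟨f, hpath, ⟨?_, ?_⟩⟩
  · rintro _ ⟨l, rfl⟩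
    have h1 : CuWayBelow (f l) (z (kk l + 1)) := (hc2 (kk l) _).2
    exact (wb_le h1).trans (hlub.1 (Set.mem_range_self _))
  · intro b hb
    refine hlub.2 ?_
    rintro _ ⟨k, rfl⟩
    -- midpoint of the k-th interval
    have hqlt : qb k < qb (k+1) := qb_strictMono (Nat.lt_succ_self k)
    have hmid : 0 < (qb k + qb (k+1)) / 2 ∧ (qb k + qb (k+1)) / 2 < 1 := by
      have h1 := qb_nonneg k
      have h2 : 0 < qb (k+1) := lt_of_le_of_lt (qb_nonneg k) hqlt
      have h3 := qb_lt_one k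
      have h4 := qb_lt_one (k+1)
      constructor <;> [positivity; linarith]
    set mid : Iq := ⟨(qb k + qb (k+1)) / 2, hmid⟩ with hmiddef
    have hkmid : kk mid = k := kk_unique mid k (by show qb k ≤ (qb k + qb (k+1))/2; linarith)
      (by show (qb k + qb (k+1))/2 < qb (k+1); linarith)
    have h5 : CuWayBelow (z (kk mid)) (f mid) := (hc2 (kk mid) _).1
    rw [hkmid] at h5
    exact (wb_le h5).trans (hb (Set.mem_range_self mid))

end CuAux


/-- For a Cu-semigroup `S` regarded as a `Q`-semigroup with auxiliary relation `≪`,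
the endpoint map `τ(S, ≪) → S` is an order-isomorphism. -/
theorem stmt13 {S : Type*} [AddCommMonoid S] [PartialOrder S] [IsCuSgp S]
    (P : PSgp S) (hP : ∀ a b : S, P.prec a b ↔ CuWayBelow a b) :
    ∃ e : PSgp.Tau P ≃o S, ∀ f : P.Path, IsLUB (Set.range f.1) (e ⟦f⟧) := by

  classical
  have hwb : ∀ f : P.Path, ∀ ⦃l m : Iq⦄, l.1 < m.1 → CuWayBelow (f.1 l) (f.1 m) :=
    fun f _ _ h => (hP _ _).1 (f.2 h)
  have hE : ∀ f : P.Path, ∃ s, IsLUB (Set.range f.1) s ∧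
      IsLUB (Set.range (f.1 ∘ CuAux.lseq)) s := fun f => CuAux.path_lub (hwb f)
  set E : P.Path → S := fun f => (hE f).choose with hEdef
  have hE1 : ∀ f, IsLUB (Set.range f.1) (E f) := fun f => (hE f).choose_spec.1
  have hE2 : ∀ f, IsLUB (Set.range (f.1 ∘ CuAux.lseq)) (E f) := fun f => (hE f).choose_spec.2
  have hmono : ∀ f g : P.Path, PSgp.pLe f g → E f ≤ E g := by
    intro f g h
    apply (hE1 f).2
    rintro _ ⟨l, rfl⟩
    obtain ⟨m, hm⟩ := h l
    exact (CuAux.wb_le ((hP _ _).1 hm)).trans ((hE1 g).1 (Set.mem_range_self m))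
  have hrefl : ∀ f g : P.Path, E f ≤ E g → PSgp.pLe f g := by
    intro f g hle l
    obtain ⟨m, hm⟩ := Iq.exists_gt l
    have hwb' : CuWayBelow (f.1 l) (f.1 m) := hwb f hm
    have hmono' : Monotone (g.1 ∘ CuAux.lseq) := monotone_nat_of_le_succ fun n =>
      CuAux.wb_le (hwb g (CuAux.lseq_lt (Nat.lt_succ_self n)))
    have hfm : f.1 m ≤ E g := ((hE1 f).1 (Set.mem_range_self m)).trans hle
    obtain ⟨k, hk⟩ := hwb' (g.1 ∘ CuAux.lseq) hmono' (E g) (hE2 g) hfm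
    obtain ⟨m', hm'⟩ := Iq.exists_gt (CuAux.lseq k)
    exact ⟨m', (hP _ _).2 (CuAux.le_wb hk (hwb g hm'))⟩
  set Ehat : PSgp.Tau P → S :=
    Quotient.lift E (fun f g hfg => le_antisymm (hmono f g hfg.1) (hmono g f hfg.2)) with hEhat
  have hinj : Function.Injective Ehat := by
    intro a b
    refine Quotient.inductionOn₂ a b ?_
    intro f g h
    exact Quotient.sound ⟨hrefl f g (le_of_eq h), hrefl g f (le_of_eq h.symm)⟩
  have hsurj : Function.Surjective Ehat := by
    intro a
    obtain ⟨fn, hfn1, hfn2⟩ := CuAux.exists_path_lub (S := S) a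
    exact ⟨⟦(⟨fn, fun l m h => (hP _ _).2 (hfn1 h)⟩ : P.Path)⟧, (hE1 _).unique hfn2⟩
  refine ⟨⟨Equiv.ofBijective Ehat ⟨hinj, hsurj⟩, ?_⟩, fun f => hE1 f⟩
  intro a b
  refine Quotient.inductionOn₂ a b ?_
  intro f g
  exact ⟨hrefl f g, hmono f g⟩
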